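/- Let (σ_k)_{k ∈ Fin n} be an abelian maximal CDP family and (A^k)_{k ∈ Fin n} matrices in Matrix (Fin n) (Fin n) ℂ with entries (A^k)_{ij} = a_{ij}^k. Then the realignment of the CDP matrix satisfies R(ρ[𝒜,Σ]) = ρ[𝒜̃,Σ] for the same CDP family Σ, where 𝒜̃ = (Ã^k) is given by (Ã^k)_{ij} = a_{i, σ_k(i)}^{σ_i⁻¹(j)}. -/
import Mathlib


/-- The CDP matrix of `A` and a permutation `σ`. -/
def cdpMatrix {n : ℕ} (A : Matrix (Fin n) (Fin n) ℂ) (σ : Equiv.Perm (Fin n)) :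
    Matrix (Fin n × Fin n) (Fin n × Fin n) ℂ :=
  Matrix.of fun x y => if x.2 = σ x.1 ∧ y.2 = σ y.1 then A x.1 y.1 else 0

/-- The realignment of a matrix indexed by `Fin n × Fin n`:
`R(X)_{(i,j),(k,l)} = X_{(i,k),(j,l)}`. -/
def realign {n : ℕ} (X : Matrix (Fin n × Fin n) (Fin n × Fin n) ℂ) :
    Matrix (Fin n × Fin n) (Fin n × Fin n) ℂ :=
  Matrix.of fun x y => X (x.1, y.1) (x.2, y.2)

/-- For an abelian maximal CDP family, the realignment of `ρ[𝒜,Σ]` is `ρ[𝒜̃,Σ]` for the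
same CDP family, where `(Ã^k)_{ij} = a_{i,σ_k(i)}^{σ_i⁻¹(j)}`. -/
theorem realign_cdpMatrix_abelian {n : ℕ} [NeZero n] (σ : Fin n → Equiv.Perm (Fin n))
    (hcdp : ∀ i j, i ≠ j → ∀ k, σ i k ≠ σ j k)
    (hnorm : ∀ i, σ i 0 = i)
    (hab : ∀ i j, σ i * σ j = σ j * σ i)
    (A : Fin n → Matrix (Fin n) (Fin n) ℂ) :
    realign (∑ k, cdpMatrix (A k) (σ k)) =
      ∑ k, cdpMatrix (Matrix.of fun i j => A ((σ i)⁻¹ j) i (σ k i)) (σ k) := by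
  have hcomm : ∀ m i : Fin n, σ m i = σ i m := by
    intro m i
    calc σ m i = σ m (σ i 0) := by rw [hnorm]
      _ = (σ m * σ i) 0 := rfl
      _ = (σ i * σ m) 0 := by rw [hab]
      _ = σ i (σ m 0) := rfl
      _ = σ i m := by rw [hnorm]
  ext ⟨i, j⟩ ⟨k, l⟩
  simp only [realign, cdpMatrix, Matrix.of_apply, Matrix.sum_apply]
  set m0 := (σ i)⁻¹ k with hm0
  set m1 := (σ i)⁻¹ j with hm1
  have hk : σ i m0 = k := Equiv.apply_symm_apply _ _
  have hj : σ i m1 = j := Equiv.apply_symm_apply _ _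
  have L : ∀ m : Fin n, (if k = σ m i ∧ l = σ m j then A m i j else 0)
      = if m = m0 then (if l = σ m0 j then A m0 i j else 0) else 0 := by
    intro m
    by_cases h : m = m0
    · subst h; simp [hcomm m0 i, hk]
    · have hne : k ≠ σ m i := by
        rw [hcomm]
        intro he
        exact h (by rw [hm0, he]; simp)
      simp [h, hne]
  have R : ∀ m : Fin n,
      (if j = σ m i ∧ l = σ m k then A ((σ i)⁻¹ k) i (σ m i) else 0)
      = if m = m1 then (if l = σ m1 k then A m0 i j else 0) else 0 := by
    intro m
    by_cases h : m = m1
    · subst h; simp [hcomm m1 i, hj, ← hm0]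
    · have hne : j ≠ σ m i := by
        rw [hcomm]
        intro he
        exact h (by rw [hm1, he]; simp)
      simp [h, hne]
  rw [Finset.sum_congr rfl (fun m _ => L m), Finset.sum_congr rfl (fun m _ => R m),
    Finset.sum_ite_eq' Finset.univ m0, Finset.sum_ite_eq' Finset.univ m1]
  have hkey : σ m0 j = σ m1 k := by
    calc σ m0 j = σ m0 (σ m1 i) := by rw [hcomm m1 i, hj]
      _ = (σ m0 * σ m1) i := rfl
      _ = (σ m1 * σ m0) i := by rw [hab]
      _ = σ m1 (σ i m0) := by rw [Equiv.Perm.mul_apply, hcomm m0 i]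
      _ = σ m1 k := by rw [hk]
  simp [hkey]
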